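/- Let λ > 2. For every z ∈ 𝓔₁ one has λz − 1 ≠ 0, and the Möbius transformation 𝓣.z = z/(λz − 1), given by the matrix 𝓣 = !![1, 0; λ, -1], maps 𝓔₁ bijectively onto 𝓔₁. -/

import Mathlib

/-- For `λ > 2`, the Möbius transformation `𝓣.z = z/(λz − 1)` (matrix
`!![1,0;λ,-1]`) is defined on the disc `𝓔₁` and maps `𝓔₁` bijectively onto itself. -/
theorem T_maps_E1_bijectively
    (lam : ℝ) (hlam : 2 < lam)
    (E1 : Set ℂ)
    (hE1 : E1 = Metric.ball ((((2 * lam) / ((lam + 2) * (lam - 2)) : ℝ)) : ℂ)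
      (4 / ((lam + 2) * (lam - 2)))) :
    (∀ z ∈ E1, (lam : ℂ) * z - 1 ≠ 0) ∧
    Set.BijOn (fun z : ℂ => z / ((lam : ℂ) * z - 1)) E1 E1 := by
  have hD : (0:ℝ) < (lam + 2) * (lam - 2) := by nlinarith
  set A : ℝ := (lam + 2) * (lam - 2) with hA
  have hA4 : A = lam^2 - 4 := by rw [hA]; ring
  have hAc : (A:ℂ) ≠ 0 := by exact_mod_cast hD.ne'
  -- membership characterization
  have hmem : ∀ z : ℂ, z ∈ E1 ↔ ‖(A:ℂ) * z - 2*lam‖ < 4 := by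
    intro z
    rw [hE1, Metric.mem_ball, Complex.dist_eq]
    have h1 : (A:ℂ) * z - 2*lam = (A:ℂ) * (z - (((2*lam)/A : ℝ):ℂ)) := by
      push_cast
      field_simp
    rw [h1, norm_mul, Complex.norm_real, Real.norm_of_nonneg hD.le, lt_div_iff₀ hD, mul_comm]
  -- key algebraic identity
  have key : ∀ z : ℂ, Complex.normSq ((A:ℂ)*z - 2*lam) - 16 =
      Complex.normSq (((lam:ℂ)^2+4)*z - 2*lam) - 16 * Complex.normSq ((lam:ℂ)*z - 1) := by
    intro z
    have e1 : ((lam:ℂ)^2+4)*z - 2*lam = (((lam^2+4:ℝ)):ℂ)*z - ((2*lam:ℝ):ℂ) := by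
      push_cast; ring
    have e2 : (A:ℂ)*z - 2*lam = (A:ℂ)*z - ((2*lam:ℝ):ℂ) := by push_cast; ring
    have e3 : (lam:ℂ)*z - 1 = (lam:ℂ)*z - ((1:ℝ):ℂ) := by norm_num
    rw [e1, e2, e3]
    simp only [Complex.normSq_apply, Complex.sub_re, Complex.sub_im, Complex.mul_re,
      Complex.mul_im, Complex.ofReal_re, Complex.ofReal_im]
    rw [hA4]
    ring
  -- nonvanishing of the denominator
  have hne : ∀ z ∈ E1, (lam:ℂ) * z - 1 ≠ 0 := by
    intro z hz h0
    have h1 : ‖(A:ℂ)*z - 2*lam‖ < 4 := (hmem z).1 hz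
    have h2 : Complex.normSq ((A:ℂ)*z - 2*lam) < 16 := by
      have := norm_nonneg ((A:ℂ)*z - 2*lam)
      rw [← Complex.sq_norm]; nlinarith
    have h3 := key z
    rw [h0] at h3
    simp at h3
    nlinarith [Complex.normSq_nonneg (((lam:ℂ)^2+4)*z - 2*lam)]
  -- maps to
  have hmap : ∀ z ∈ E1, z / ((lam:ℂ)*z - 1) ∈ E1 := by
    intro z hz
    have h0 := hne z hz
    have h1 : ‖(A:ℂ)*z - 2*lam‖ < 4 := (hmem z).1 hz
    have h2 : Complex.normSq ((A:ℂ)*z - 2*lam) < 16 := by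
      have := norm_nonneg ((A:ℂ)*z - 2*lam)
      rw [← Complex.sq_norm]; nlinarith
    have h3 := key z
    have h4 : Complex.normSq (((lam:ℂ)^2+4)*z - 2*lam) <
        16 * Complex.normSq ((lam:ℂ)*z - 1) := by linarith
    have h5 : ‖((lam:ℂ)^2+4)*z - 2*lam‖ < 4 * ‖(lam:ℂ)*z - 1‖ := by
      have ha := norm_nonneg (((lam:ℂ)^2+4)*z - 2*lam)
      have hb : 0 < ‖(lam:ℂ)*z - 1‖ := by
        simpa [norm_pos_iff] using h0
      rw [← Complex.sq_norm, ← Complex.sq_norm] at h4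
      nlinarith
    rw [hmem]
    have hcalc : (A:ℂ)*(z/((lam:ℂ)*z - 1)) - 2*lam =
        -((((lam:ℂ)^2+4)*z - 2*lam)) / ((lam:ℂ)*z - 1) := by
      rw [hA4]
      push_cast
      field_simp
      ring
    rw [hcalc, norm_div, norm_neg]
    rw [div_lt_iff₀ (by simpa [norm_pos_iff] using h0)]
    exact h5
  -- involution
  have hTT : ∀ z : ℂ, (lam:ℂ)*z - 1 ≠ 0 →
      (z/((lam:ℂ)*z - 1)) / ((lam:ℂ)*(z/((lam:ℂ)*z - 1)) - 1) = z := by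
    intro z h0
    have h2 : (lam:ℂ)*(z/((lam:ℂ)*z - 1)) - 1 = 1/((lam:ℂ)*z - 1) := by
      field_simp
      ring
    rw [h2]
    field_simp
    exact mul_div_cancel_right₀ z (by rwa [mul_comm] at h0)
  refine ⟨hne, hmap, ?_, ?_⟩
  · intro a ha b hb h
    simp only at h
    calc a = (a/((lam:ℂ)*a - 1)) / ((lam:ℂ)*(a/((lam:ℂ)*a - 1)) - 1) := (hTT a (hne a ha)).symm
      _ = (b/((lam:ℂ)*b - 1)) / ((lam:ℂ)*(b/((lam:ℂ)*b - 1)) - 1) := by rw [h]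
      _ = b := hTT b (hne b hb)
  · intro y hy
    exact ⟨y/((lam:ℂ)*y - 1), hmap y hy, hTT y (hne y hy)⟩
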